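/- (Small-ball probability bound used in the precoding rate analysis.) Let t ≥ 1 and c ≥ 0. Then μ{h ∈ ℂ^t : ‖h‖² ≤ c} ≤ c^t/Γ(t+1). -/

import Mathlib

open MeasureTheory

noncomputable instance (t : ℕ) : MeasureSpace (EuclideanSpace ℂ (Fin t)) where
  volume := Measure.map (WithLp.toLp 2) (MeasureSpace.pi (α := fun _ : Fin t => ℂ)).volume

/-- The Gaussian tail function `Q(x) = (1/√(2π)) ∫_x^∞ exp(-u²/2) du`. -/
noncomputable def gaussianQ (x : ℝ) : ℝ :=
  (Real.sqrt (2 * Real.pi))⁻¹ * ∫ u in Set.Ioi x, Real.exp (-(u ^ 2) / 2)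

/-- The standard complex Gaussian measure `CN(0, I_t)` on `ℂ^t`, with density
`h ↦ π^{-t} exp(-‖h‖²)` with respect to Lebesgue measure. -/
noncomputable def stdCGauss (t : ℕ) : Measure (EuclideanSpace ℂ (Fin t)) :=
  volume.withDensity fun h => ENNReal.ofReal ((Real.pi ^ t)⁻¹ * Real.exp (-‖h‖ ^ 2))

instance (t : ℕ) : BorelSpace (EuclideanSpace ℂ (Fin t)) := inferInstance

lemma volume_small_ball (t : ℕ) (ht : 1 ≤ t) (c : ℝ) (hc : 0 ≤ c) :
    volume {h : EuclideanSpace ℂ (Fin t) | ‖h‖ ^ 2 ≤ c}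
      = ENNReal.ofReal (c ^ t) * ENNReal.ofReal
        ((Real.pi * Real.Gamma (2 / 2 + 1)) ^ t / Real.Gamma (2 * t / 2 + 1)) := by
  have hNE : Nonempty (Fin t) := ⟨⟨0, ht⟩⟩
  have key : volume {h : EuclideanSpace ℂ (Fin t) |
        (∑ i, ‖h i‖ ^ (2 : ℝ)) ^ (1 / (2 : ℝ)) ≤ Real.sqrt c}
      = (ENNReal.ofReal (Real.sqrt c)) ^ (2 * t) * ENNReal.ofReal
        ((Real.pi * Real.Gamma (2 / 2 + 1)) ^ t / Real.Gamma (2 * t / 2 + 1)) := by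
    have := Complex.volume_sum_rpow_le (ι := Fin t) one_le_two (Real.sqrt c)
    rw [show (volume : Measure (EuclideanSpace ℂ (Fin t)))
        = Measure.map (MeasurableEquiv.toLp 2 (Fin t → ℂ)) volume from rfl,
      MeasurableEquiv.map_apply]
    simpa [Fintype.card_fin] using this
  have hset : {h : EuclideanSpace ℂ (Fin t) | ‖h‖ ^ 2 ≤ c}
      = {h : EuclideanSpace ℂ (Fin t) |
        (∑ i, ‖h i‖ ^ (2 : ℝ)) ^ (1 / (2 : ℝ)) ≤ Real.sqrt c} := by
    ext h
    simp only [Set.mem_setOf_eq]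
    have h1 : (∑ i, ‖h i‖ ^ (2 : ℝ)) = ∑ i, ‖h i‖ ^ (2 : ℕ) := by
      congr 1; ext i; rw [← Real.rpow_natCast]; norm_num
    have hnn : (0:ℝ) ≤ ∑ i, ‖h i‖ ^ (2 : ℕ) := by positivity
    rw [h1, ← Real.sqrt_eq_rpow, ← EuclideanSpace.norm_eq]
    constructor
    · intro hl
      exact (Real.le_sqrt (norm_nonneg h) hc).mpr hl
    · intro hl
      exact (Real.le_sqrt (norm_nonneg h) hc).mp hl
  rw [hset, key]
  congr 1
  rw [pow_mul, ← ENNReal.ofReal_pow (Real.sqrt_nonneg c), Real.sq_sqrt hc,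
    ← ENNReal.ofReal_pow hc]

/-- Small-ball probability bound: `μ{h : ‖h‖ ^ 2 ≤ c} ≤ c^t / Γ(t+1)`. -/
theorem norm_sq_small_ball (t : ℕ) (ht : 1 ≤ t) (c : ℝ) (hc : 0 ≤ c) :
    stdCGauss t {h | ‖h‖ ^ 2 ≤ c} ≤ ENNReal.ofReal (c ^ t / Real.Gamma (t + 1)) := by
  have hSm : MeasurableSet {h : EuclideanSpace ℂ (Fin t) | ‖h‖ ^ 2 ≤ c} := by
    have hcont : Continuous fun h : EuclideanSpace ℂ (Fin t) => ‖h‖ ^ 2 := by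
      fun_prop
    exact measurableSet_le hcont.measurable measurable_const
  have hbound : stdCGauss t {h | ‖h‖ ^ 2 ≤ c}
      ≤ ENNReal.ofReal ((Real.pi ^ t)⁻¹) *
        volume {h : EuclideanSpace ℂ (Fin t) | ‖h‖ ^ 2 ≤ c} := by
    rw [stdCGauss, withDensity_apply _ hSm]
    calc ∫⁻ x in {h : EuclideanSpace ℂ (Fin t) | ‖h‖ ^ 2 ≤ c},
          ENNReal.ofReal ((Real.pi ^ t)⁻¹ * Real.exp (-‖x‖ ^ 2))
        ≤ ∫⁻ _ in {h : EuclideanSpace ℂ (Fin t) | ‖h‖ ^ 2 ≤ c},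
          ENNReal.ofReal ((Real.pi ^ t)⁻¹) := by
          apply lintegral_mono
          intro x
          apply ENNReal.ofReal_le_ofReal
          have h1 : Real.exp (-‖x‖ ^ 2) ≤ 1 := by
            rw [Real.exp_le_one_iff]; exact neg_nonpos.mpr (by positivity)
          calc (Real.pi ^ t)⁻¹ * Real.exp (-‖x‖ ^ 2)
              ≤ (Real.pi ^ t)⁻¹ * 1 := by
                apply mul_le_mul_of_nonneg_left h1 (by positivity)
            _ = (Real.pi ^ t)⁻¹ := mul_one _
      _ = ENNReal.ofReal ((Real.pi ^ t)⁻¹) *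
          volume {h : EuclideanSpace ℂ (Fin t) | ‖h‖ ^ 2 ≤ c} := by
          rw [lintegral_const, Measure.restrict_apply MeasurableSet.univ, Set.univ_inter]
  refine hbound.trans ?_
  rw [volume_small_ball t ht c hc]
  have hg2 : Real.Gamma (2 / 2 + 1) = 1 := by
    norm_num [Real.Gamma_two]
  have ht2 : 2 * (t:ℝ) / 2 + 1 = (t:ℝ) + 1 := by ring
  rw [hg2, ht2, mul_one]
  rw [← ENNReal.ofReal_mul (by positivity), ← ENNReal.ofReal_mul (by positivity)]
  apply ENNReal.ofReal_le_ofReal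
  have hGpos : 0 < Real.Gamma ((t:ℝ) + 1) := by
    apply Real.Gamma_pos_of_pos; positivity
  have hpi : (0:ℝ) < Real.pi ^ t := by positivity
  rw [div_eq_mul_inv (Real.pi ^ t), div_eq_mul_inv (c ^ t)]
  calc (Real.pi ^ t)⁻¹ * (c ^ t * (Real.pi ^ t * (Real.Gamma ((t:ℝ) + 1))⁻¹))
      = (Real.pi ^ t)⁻¹ * Real.pi ^ t * (c ^ t * (Real.Gamma ((t:ℝ) + 1))⁻¹) := by ring
    _ = c ^ t * (Real.Gamma ((t:ℝ) + 1))⁻¹ := by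
        rw [inv_mul_cancel₀ hpi.ne', one_mul]
    _ ≤ c ^ t * (Real.Gamma ((t:ℝ) + 1))⁻¹ := le_rfl
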